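/- arXiv:2407.13877 — 4 statements merged into one kernel-verified Lean document; each statement's English description precedes it below -/
import Mathlib

section
/- Let E be a finite-dimensional real normed vector space, let A : E → E be an invertible linear map with operator norm ‖A^{−1}‖ < 1, let f : 𝕋^d → 𝕋^d be continuous, and let R : 𝕋^d → E be continuous. Then there is a unique continuous map h : 𝕋^d → E satisfying A(h(x)) − h(f(x)) = R(x) for all x ∈ 𝕋^d, and it is given by the uniformly convergent series h = Σ_{k=0}^∞ A^{−(k+1)}(R∘f^k). -/
noncomputable section

/-- The `d`-dimensional torus `𝕋^d = ℝ^d/ℤ^d`. -/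
abbrev Torus (d : ℕ) := Fin d → AddCircle (1 : ℝ)

/-- Let `E` be a finite-dimensional real normed vector space, let
`A : E → E` be an invertible linear map with `‖A⁻¹‖ < 1`, let `f : 𝕋^d → 𝕋^d` be continuous
and `R : 𝕋^d → E` continuous. Then there is a unique continuous `h : 𝕋^d → E` with
`A(h(x)) - h(f(x)) = R(x)` for all `x`, and it is given by the uniformly convergent series
`h = Σ_{k=0}^∞ A^{-(k+1)} (R ∘ f^k)`. -/
theorem statement_8 {d : ℕ} {E : Type*} [NormedAddCommGroup E] [NormedSpace ℝ E]
    [FiniteDimensional ℝ E]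
    (A : E ≃L[ℝ] E) (hA : ‖A.symm.toContinuousLinearMap‖ < 1)
    (f : Torus d → Torus d) (hf : Continuous f)
    (R : Torus d → E) (hR : Continuous R) :
    ∃ h : Torus d → E, Continuous h ∧ (∀ x, A (h x) - h (f x) = R x) ∧
      TendstoUniformly
        (fun (N : ℕ) (x : Torus d) =>
          ∑ k ∈ Finset.range N, (A.symm.toContinuousLinearMap ^ (k + 1)) (R (f^[k] x)))
        h Filter.atTop ∧
      ∀ h' : Torus d → E, Continuous h' → (∀ x, A (h' x) - h' (f x) = R x) → h' = h := by
  have : CompleteSpace E := FiniteDimensional.complete ℝ E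
  set B := A.symm.toContinuousLinearMap with hBdef
  -- bound on R
  obtain ⟨x₀, hx₀⟩ := hR.norm.exists_forall_ge' (Classical.arbitrary _)
    (by simp [Filter.cocompact_eq_bot])
  set C := ‖R x₀‖ with hCdef
  have hC : ∀ x, ‖R x‖ ≤ C := fun x => hx₀ x
  have hC0 : 0 ≤ C := norm_nonneg _
  have hpow : ∀ (n : ℕ) (v : E), ‖(B ^ n) v‖ ≤ ‖B‖ ^ n * ‖v‖ := by
    intro n
    induction n with
    | zero => intro v; simp
    | succ n ih =>
      intro v
      rw [pow_succ, ContinuousLinearMap.mul_apply]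
      calc ‖(B ^ n) (B v)‖ ≤ ‖B‖ ^ n * ‖B v‖ := ih (B v)
      _ ≤ ‖B‖ ^ n * (‖B‖ * ‖v‖) := by
          exact mul_le_mul_of_nonneg_left (B.le_opNorm v) (pow_nonneg (norm_nonneg _) _)
      _ = ‖B‖ ^ (n + 1) * ‖v‖ := by ring
  have hAB : ∀ (k : ℕ) (v : E), A ((B ^ (k + 1)) v) = (B ^ k) v := by
    intro k v
    rw [pow_succ', ContinuousLinearMap.mul_apply]
    exact A.apply_symm_apply _
  have hgeo : Summable (fun k : ℕ => ‖B‖ ^ (k + 1) * C) := by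
    have := (summable_geometric_of_lt_one (norm_nonneg B) hA).mul_left (‖B‖ * C)
    refine this.congr fun k => ?_
    rw [pow_succ']; ring
  have hbound : ∀ (k : ℕ) (x : Torus d),
      ‖(B ^ (k + 1)) (R (f^[k] x))‖ ≤ ‖B‖ ^ (k + 1) * C := by
    intro k x
    calc ‖(B ^ (k + 1)) (R (f^[k] x))‖ ≤ ‖B‖ ^ (k + 1) * ‖R (f^[k] x)‖ := hpow _ _
    _ ≤ ‖B‖ ^ (k + 1) * C :=
        mul_le_mul_of_nonneg_left (hC _) (pow_nonneg (norm_nonneg _) _)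
  have hsx : ∀ x, Summable (fun k : ℕ => (B ^ (k + 1)) (R (f^[k] x))) := fun x =>
    Summable.of_norm_bounded hgeo (fun k => hbound k x)
  set h : Torus d → E := fun x => ∑' k : ℕ, (B ^ (k + 1)) (R (f^[k] x)) with hhdef
  have hunif : TendstoUniformly
      (fun (N : ℕ) (x : Torus d) => ∑ k ∈ Finset.range N, (B ^ (k + 1)) (R (f^[k] x)))
      h Filter.atTop := tendstoUniformly_tsum_nat hgeo hbound
  have hcont : Continuous h := by
    refine hunif.continuous (Filter.Frequently.of_forall fun N => ?_)
    exact continuous_finset_sum _ fun k _ => (B ^ (k + 1)).continuous.comp (hR.comp (hf.iterate k))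
  have heq : ∀ x, A (h x) - h (f x) = R x := by
    intro x
    have h1 : A (h x) = ∑' k : ℕ, (B ^ k) (R (f^[k] x)) := by
      simp only [hhdef]
      rw [A.map_tsum]
      congr 1
      funext k
      exact hAB k _
    have hg : Summable (fun k : ℕ => (B ^ k) (R (f^[k] x))) :=
      Summable.of_norm_bounded ((summable_geometric_of_lt_one (norm_nonneg B) hA).mul_right C)
        (fun k => le_trans (hpow _ _)
          (mul_le_mul_of_nonneg_left (hC _) (pow_nonneg (norm_nonneg _) _)))
    rw [h1, hg.tsum_eq_zero_add]
    have h2 : ∑' k : ℕ, (B ^ (k + 1)) (R (f^[k + 1] x)) = h (f x) := by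
      simp only [hhdef]
      exact tsum_congr fun k => by rw [Function.iterate_succ_apply]
    simp only [pow_zero, ContinuousLinearMap.one_apply, Function.iterate_zero_apply] at *
    rw [h2]
    abel
  refine ⟨h, hcont, heq, hunif, ?_⟩
  intro h' hcont' heq'
  -- uniqueness
  obtain ⟨y₀, hy₀⟩ := ((hcont'.sub hcont).norm).exists_forall_ge' (Classical.arbitrary _)
    (by simp [Filter.cocompact_eq_bot])
  set M := ‖h' y₀ - h y₀‖ with hMdef
  have hM : ∀ x, ‖h' x - h x‖ ≤ M := fun x => hy₀ x
  have key : ∀ (n : ℕ) (x : Torus d), h' x - h x = (B ^ n) (h' (f^[n] x) - h (f^[n] x)) := by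
    intro n
    induction n with
    | zero => intro x; simp
    | succ n ih =>
      intro x
      have e1 : h' x - h x = B (h' (f x) - h (f x)) := by
        have e2 : A (h' x) - A (h x) = h' (f x) - h (f x) := by
          have u1 := heq' x; have u2 := heq x
          have : A (h' x) - h' (f x) = A (h x) - h (f x) := by rw [u1, u2]
          exact sub_eq_sub_iff_sub_eq_sub.mp this
        have : A (h' x - h x) = h' (f x) - h (f x) := by rw [map_sub]; exact e2
        calc h' x - h x = A.symm (A (h' x - h x)) := (A.symm_apply_apply _).symm
        _ = B (h' (f x) - h (f x)) := by rw [this]; rfl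
      rw [e1, ih (f x), ← ContinuousLinearMap.mul_apply, ← pow_succ']
      simp [Function.iterate_succ_apply]
  have hzero : ∀ x, h' x - h x = 0 := by
    intro x
    have hle : ∀ n : ℕ, ‖h' x - h x‖ ≤ ‖B‖ ^ n * M := by
      intro n
      rw [key n x]
      calc ‖(B ^ n) (h' (f^[n] x) - h (f^[n] x))‖
          ≤ ‖B‖ ^ n * ‖h' (f^[n] x) - h (f^[n] x)‖ := hpow _ _
      _ ≤ ‖B‖ ^ n * M := mul_le_mul_of_nonneg_left (hM _) (pow_nonneg (norm_nonneg _) _)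
    have htend : Filter.Tendsto (fun n : ℕ => ‖B‖ ^ n * M) Filter.atTop (nhds 0) := by
      have := tendsto_pow_atTop_nhds_zero_of_lt_one (norm_nonneg B) hA
      simpa using this.mul_const M
    have := ge_of_tendsto' htend hle
    have := le_antisymm this (norm_nonneg _)
    rwa [norm_eq_zero] at this
  funext x
  have := hzero x
  have := sub_eq_zero.mp this; exact this

end
end

section
/- (Katznelson's Lemma) Let A be a d×d integer matrix and suppose ℝ^d = V₁ ⊕ V₂ where V₁ and V₂ are A-invariant subspaces such that the restrictions A|_{V₁} and A|_{V₂} have no common complex eigenvalue. If V₁ ∩ ℤ^d = {0}, then there exists a constant K > 0 such that dist(n, V₁) ≥ K‖n‖^{−d} for every nonzero n ∈ ℤ^d. -/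
noncomputable section

/-- `ℝ^d`. -/
abbrev Ed (d : ℕ) := Fin d → ℝ

/-- The integer vector `n` viewed as a point of `ℝ^d`. -/
def intVec {d : ℕ} (n : Fin d → ℤ) : Ed d := fun i => (n i : ℝ)

/-- The Euclidean norm on `ℝ^d`. -/
def eucNorm {d : ℕ} (x : Ed d) : ℝ := Real.sqrt (∑ i, x i ^ 2)

/-- The Euclidean distance from a point of `ℝ^d` to a subspace. -/
def eucDist {d : ℕ} (x : Ed d) (V : Submodule ℝ (Ed d)) : ℝ :=
  sInf ((fun w => eucNorm (x - w)) '' (V : Set (Ed d)))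

open Polynomial UniqueFactorizationMonoid in
lemma finite_monic_dvd {P : Polynomial ℝ} (hP : P ≠ 0) :
    {g : Polynomial ℝ | g.Monic ∧ g ∣ P}.Finite := by
  classical
  set T := (normalizedFactors P).powerset.toFinset
  have himg : (fun g => normalizedFactors g) '' {g : Polynomial ℝ | g.Monic ∧ g ∣ P} ⊆ ↑T := by
    rintro s ⟨g, ⟨hm, hd⟩, rfl⟩
    simp only [T, Multiset.mem_toFinset, Multiset.mem_powerset, Finset.mem_coe]
    exact (dvd_iff_normalizedFactors_le_normalizedFactors hm.ne_zero hP).mp hd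
  refine Set.Finite.of_finite_image (T.finite_toSet.subset himg) ?_
  rintro g₁ ⟨hm₁, -⟩ g₂ ⟨hm₂, -⟩ h
  have a₁ := prod_normalizedFactors hm₁.ne_zero
  have a₂ := prod_normalizedFactors hm₂.ne_zero
  simp only at h; rw [h] at a₁
  exact Polynomial.eq_of_monic_of_associated hm₁ hm₂ (a₁.symm.trans a₂)

open Polynomial in
lemma coprime_of_no_common_root {p₁ p₂ : Polynomial ℝ} (h₁ : p₁.Monic)
    (hsep : ¬ ∃ z : ℂ, aeval z p₁ = 0 ∧ aeval z p₂ = 0) : IsCoprime p₁ p₂ := by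
  classical
  by_contra hc
  have hg : ¬ IsUnit (EuclideanDomain.gcd p₁ p₂) := by
    rw [EuclideanDomain.gcd_isUnit_iff]; exact hc
  have hgne : EuclideanDomain.gcd p₁ p₂ ≠ 0 := by
    intro h0
    have := EuclideanDomain.gcd_eq_zero_iff.mp h0
    exact h₁.ne_zero this.1
  have hdeg : 0 < (EuclideanDomain.gcd p₁ p₂).degree := by
    rcases lt_or_ge 0 (EuclideanDomain.gcd p₁ p₂).degree with h | h
    · exact h
    · exact absurd (Polynomial.isUnit_iff_degree_eq_zero.mpr
        (le_antisymm h (zero_le_degree_iff.mpr hgne))) hg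
  set g := EuclideanDomain.gcd p₁ p₂ with hgdef
  have hmap : 0 < (g.map (algebraMap ℝ ℂ)).degree := by rwa [degree_map]
  obtain ⟨z, hz⟩ := Complex.exists_root hmap
  have hroot : aeval z g = 0 := by
    rw [aeval_def, ← eval_map]
    exact hz
  refine hsep ⟨z, ?_, ?_⟩
  · obtain ⟨t, ht⟩ := EuclideanDomain.gcd_dvd_left p₁ p₂
    rw [ht, map_mul, hroot, zero_mul]
  · obtain ⟨t, ht⟩ := EuclideanDomain.gcd_dvd_right p₁ p₂
    rw [ht, map_mul, hroot, zero_mul]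

open Polynomial in
lemma aeval_restrict_coe {R : Type*} [CommRing R] {M : Type*} [AddCommGroup M] [Module R M]
    {f : M →ₗ[R] M} {V : Submodule R M} (h : ∀ x ∈ V, f x ∈ V) (p : R[X]) (x : V) :
    ((aeval (f.restrict h) p x : V) : M) = aeval f p (x : M) := by
  have hpow : ∀ (k : ℕ) (x : V), (((f.restrict h) ^ k) x : M) = (f ^ k) (x : M) := by
    intro k
    induction k with
    | zero => intro x; simp
    | succ k ih =>
        intro x
        simp only [pow_succ, Module.End.mul_apply, LinearMap.restrict_apply]
        rw [ih]
  induction p using Polynomial.induction_on' with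
  | add p q hp hq => simp [map_add, hp, hq]
  | monomial k a =>
      simp only [aeval_monomial, Module.End.mul_apply, Module.algebraMap_end_apply,
        Submodule.coe_smul, hpow]

def toE {d : ℕ} : Ed d ≃ₗ[ℝ] EuclideanSpace ℝ (Fin d) :=
  (WithLp.linearEquiv 2 ℝ (Fin d → ℝ)).symm

lemma eucNorm_eq {d : ℕ} (x : Ed d) : eucNorm x = ‖toE x‖ := by
  rw [EuclideanSpace.norm_eq, eucNorm]
  congr 1
  refine Finset.sum_congr rfl fun i _ => ?_
  rw [Real.norm_eq_abs, sq_abs]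
  rfl

lemma eucNorm_nonneg {d : ℕ} (x : Ed d) : 0 ≤ eucNorm x := Real.sqrt_nonneg _

lemma abs_coord_le_eucNorm {d : ℕ} (x : Ed d) (i : Fin d) : |x i| ≤ eucNorm x := by
  rw [eucNorm, ← Real.sqrt_sq_eq_abs]
  apply Real.sqrt_le_sqrt
  exact Finset.single_le_sum (f := fun i => x i ^ 2) (fun j _ => sq_nonneg _) (Finset.mem_univ i)

lemma exists_opBound {d : ℕ} (L : Ed d →ₗ[ℝ] Ed d) :
    ∃ C : ℝ, 1 ≤ C ∧ ∀ x, eucNorm (L x) ≤ C * eucNorm x := by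
  set L' : EuclideanSpace ℝ (Fin d) →L[ℝ] EuclideanSpace ℝ (Fin d) :=
    (toE.toLinearMap ∘ₗ L ∘ₗ toE.symm.toLinearMap).toContinuousLinearMap
  refine ⟨‖L'‖ + 1, by have := norm_nonneg L'; linarith, fun x => ?_⟩
  have h1 : eucNorm (L x) = ‖L' (toE x)‖ := by
    rw [eucNorm_eq]
    simp [L']
  rw [h1, eucNorm_eq]
  calc ‖L' (toE x)‖ ≤ ‖L'‖ * ‖toE x‖ := L'.le_opNorm _
    _ ≤ (‖L'‖ + 1) * ‖toE x‖ := by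
        apply mul_le_mul_of_nonneg_right (by linarith) (norm_nonneg _)

open Matrix in
lemma pow_mulVecLin_intVec {d : ℕ} (A : Matrix (Fin d) (Fin d) ℤ) (n : Fin d → ℤ) (k : ℕ) :
    (((A.map ((↑) : ℤ → ℝ)).mulVecLin) ^ k) (intVec n) = intVec ((A ^ k) *ᵥ n) := by
  induction k with
  | zero => simp [intVec, Matrix.one_mulVec]
  | succ k ih =>
      rw [pow_succ', Module.End.mul_apply, ih, pow_succ', ← Matrix.mulVec_mulVec]
      ext i
      simp only [Matrix.mulVecLin_apply, Matrix.mulVec, dotProduct, intVec,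
        Matrix.map_apply]
      push_cast
      rfl


open Polynomial Matrix

/-- **Katznelson's Lemma.** Let `A` be a `d×d` integer matrix and suppose
`ℝ^d = V₁ ⊕ V₂` with `V₁, V₂` invariant under `A` and such that the restrictions `A|_{V₁}`
and `A|_{V₂}` have no common complex eigenvalue. If `V₁ ∩ ℤ^d = {0}`, then there exists
`K > 0` with `dist(n, V₁) ≥ K ‖n‖^{-d}` for every nonzero `n ∈ ℤ^d`. -/
theorem statement_11 {d : ℕ} (A : Matrix (Fin d) (Fin d) ℤ)
    (V₁ V₂ : Submodule ℝ (Ed d)) (hcompl : IsCompl V₁ V₂)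
    (h₁ : ∀ x ∈ V₁, (A.map ((↑) : ℤ → ℝ)).mulVecLin x ∈ V₁)
    (h₂ : ∀ x ∈ V₂, (A.map ((↑) : ℤ → ℝ)).mulVecLin x ∈ V₂)
    (hsep : ¬ ∃ z : ℂ,
      Polynomial.aeval z (LinearMap.charpoly (((A.map ((↑) : ℤ → ℝ)).mulVecLin).restrict h₁)) = 0 ∧
      Polynomial.aeval z (LinearMap.charpoly (((A.map ((↑) : ℤ → ℝ)).mulVecLin).restrict h₂)) = 0)
    (hint : ∀ n : Fin d → ℤ, intVec n ∈ V₁ → n = 0) :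
    ∃ K : ℝ, 0 < K ∧ ∀ n : Fin d → ℤ, n ≠ 0 →
      K * eucNorm (intVec n) ^ (-(d : ℝ)) ≤ eucDist (intVec n) V₁ := by
  classical
  rcases Nat.eq_zero_or_pos d with hd | hd
  · subst hd
    refine ⟨1, one_pos, fun n hn => absurd (_root_.funext fun i => i.elim0) hn⟩
  set M := (A.map ((↑) : ℤ → ℝ)).mulVecLin with hMdef
  set p₁ := LinearMap.charpoly (M.restrict h₁) with hp₁def
  set p₂ := LinearMap.charpoly (M.restrict h₂) with hp₂def
  have hcop : IsCoprime p₁ p₂ :=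
    coprime_of_no_common_root (LinearMap.charpoly_monic _) hsep
  obtain ⟨a, b, hab⟩ := hcop
  set q : ℝ[X] := a * p₁ with hqdef
  -- q(M) kills V₁ and is the identity on V₂
  have hker₁ : ∀ y ∈ V₁, aeval M p₁ y = 0 := by
    intro y hy
    have h := aeval_restrict_coe h₁ p₁ ⟨y, hy⟩
    rw [hp₁def, LinearMap.aeval_self_charpoly] at h
    simpa using h.symm
  have hker₂ : ∀ y ∈ V₂, aeval M p₂ y = 0 := by
    intro y hy
    have h := aeval_restrict_coe h₂ p₂ ⟨y, hy⟩
    rw [hp₂def, LinearMap.aeval_self_charpoly] at h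
    simpa using h.symm
  have hq₁ : ∀ y ∈ V₁, aeval M q y = 0 := by
    intro y hy
    rw [hqdef, _root_.map_mul, Module.End.mul_apply, hker₁ y hy, map_zero]
  have hq₂ : ∀ y ∈ V₂, aeval M q y = y := by
    intro y hy
    have hq' : q = 1 - b * p₂ := by rw [← hab, hqdef]; ring
    rw [hq', map_sub, _root_.map_one, LinearMap.sub_apply, Module.End.one_apply,
      _root_.map_mul, Module.End.mul_apply, hker₂ y hy, map_zero, sub_zero]
  -- the characteristic polynomial of M
  set P := LinearMap.charpoly M with hPdef
  have hPmonic : P.Monic := LinearMap.charpoly_monic M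
  have hPne : P ≠ 0 := hPmonic.ne_zero
  have hPdeg : P.natDegree = d := by
    have := LinearMap.charpoly_natDegree M
    rw [Module.finrank_fin_fun] at this
    exact this
  -- constants
  obtain ⟨Cq, hCq1, hCq⟩ := exists_opBound (aeval M q)
  obtain ⟨CM, hCM1, hCM⟩ := exists_opBound M
  have hMpow : ∀ (k : ℕ) (y : Ed d), eucNorm ((M ^ k) y) ≤ CM ^ k * eucNorm y := by
    intro k
    induction k with
    | zero => intro y; simp
    | succ k ih =>
        intro y
        rw [pow_succ, Module.End.mul_apply]
        calc eucNorm ((M ^ k) (M y)) ≤ CM ^ k * eucNorm (M y) := ih _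
          _ ≤ CM ^ k * (CM * eucNorm y) := by
              exact mul_le_mul_of_nonneg_left (hCM y) (by positivity)
          _ = CM ^ (k + 1) * eucNorm y := by ring
  -- the finite family of possible coefficient sizes
  have hGfin : {g : ℝ[X] | g.Monic ∧ g ∣ P ∧ q %ₘ g ≠ 0}.Finite :=
    (finite_monic_dvd hPne).subset (by rintro g ⟨hg1, hg2, hg3⟩; exact ⟨hg1, hg2⟩)
  set F : Finset ℝ := insert 1 (hGfin.toFinset.image fun g => |(q %ₘ g).leadingCoeff|) with hFdef
  have hFne : F.Nonempty := ⟨1, Finset.mem_insert_self 1 _⟩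
  set K₀ := F.min' hFne with hK₀def
  have hK₀pos : 0 < K₀ := by
    have hmem := F.min'_mem hFne
    rcases Finset.mem_insert.mp hmem with h | h
    · rw [hK₀def, h]; exact one_pos
    · obtain ⟨g, hg, hgeq⟩ := Finset.mem_image.mp h
      rw [Set.Finite.mem_toFinset] at hg
      rw [hK₀def, ← hgeq]
      exact abs_pos.mpr (Polynomial.leadingCoeff_ne_zero.mpr hg.2.2)
  set D : ℝ := (d : ℝ) * (Nat.factorial d : ℝ) * CM ^ (d * d) * Cq with hDdef
  have hDpos : 0 < D := by
    rw [hDdef]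
    have : (0:ℝ) < d := Nat.cast_pos.mpr hd
    have h2 : (0:ℝ) < (Nat.factorial d : ℝ) := Nat.cast_pos.mpr (Nat.factorial_pos d)
    positivity
  refine ⟨K₀ / D, div_pos hK₀pos hDpos, fun n hn => ?_⟩
  -- setup for a fixed nonzero integer vector n
  set x := intVec n with hxdef
  have hxne : x ≠ 0 := by
    intro h0
    apply hn
    apply _root_.funext; intro i
    have h1 : ((n i : ℝ)) = 0 := by
      have := congrFun h0 i
      simpa [hxdef, intVec] using this
    exact_mod_cast h1
  have hx1 : 1 ≤ eucNorm x := by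
    obtain ⟨i, hi⟩ := Function.ne_iff.mp hn
    have h1 : (1:ℝ) ≤ |x i| := by
      rw [hxdef]
      have : (1:ℤ) ≤ |n i| := Int.one_le_abs hi
      calc (1:ℝ) ≤ (|n i| : ℝ) := by exact_mod_cast this
        _ = |((n i : ℤ) : ℝ)| := by push_cast; rfl
        _ = |intVec n i| := rfl
    exact h1.trans (abs_coord_le_eucNorm x i)
  -- minimal annihilating polynomial of x
  have hPann : aeval M P x = 0 := by
    rw [hPdef, LinearMap.aeval_self_charpoly]
    rfl
  have hex : ∃ k : ℕ, ∃ f : ℝ[X], f.Monic ∧ aeval M f x = 0 ∧ f.natDegree = k :=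
    ⟨P.natDegree, P, hPmonic, hPann, rfl⟩
  obtain ⟨g, hgmonic, hgann, hgdeg⟩ := Nat.find_spec hex
  set m := g.natDegree with hmdef
  have hgne : g ≠ 0 := hgmonic.ne_zero
  have hmin : ∀ f : ℝ[X], f ≠ 0 → aeval M f x = 0 → m ≤ f.natDegree := by
    intro f hf hfx
    have hmon : (f * C f.leadingCoeff⁻¹).Monic := monic_mul_leadingCoeff_inv hf
    have hann : aeval M (f * C f.leadingCoeff⁻¹) x = 0 := by
      rw [_root_.map_mul, Module.End.mul_apply, aeval_C, Module.algebraMap_end_apply,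
        LinearMap.map_smul, hfx, smul_zero]
    have hle : Nat.find hex ≤ (f * C f.leadingCoeff⁻¹).natDegree :=
      Nat.find_le ⟨_, hmon, hann, rfl⟩
    rwa [natDegree_mul_leadingCoeff_inv f hf, ← hgdeg] at hle
  have hgP : g ∣ P := by
    rw [← Polynomial.modByMonic_eq_zero_iff_dvd hgmonic]
    by_contra hne
    have e1 : P %ₘ g = P - g * (P /ₘ g) :=
      eq_sub_of_add_eq (Polynomial.modByMonic_add_div P g)
    have hann : aeval M (P %ₘ g) x = 0 := by
      rw [e1, map_sub, LinearMap.sub_apply, mul_comm g, _root_.map_mul, Module.End.mul_apply,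
        hgann, _root_.map_zero, hPann, sub_zero]
    have hlt : (P %ₘ g).natDegree < m :=
      Polynomial.natDegree_lt_natDegree hne (degree_modByMonic_lt P hgmonic)
    exact absurd (hmin _ hne hann) (not_le.mpr hlt)
  have hm1 : 1 ≤ m := by
    by_contra h
    have hm0 : m = 0 := by omega
    have hg1 : g = 1 := (Polynomial.Monic.natDegree_eq_zero hgmonic).mp hm0
    rw [hg1, _root_.map_one, Module.End.one_apply] at hgann
    exact hxne hgann
  have hmd : m ≤ d := hPdeg ▸ Polynomial.natDegree_le_of_dvd hgP hPne
  set v := aeval M q x with hvdef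
  set r := q %ₘ g with hrdef
  have hvr : v = aeval M r x := by
    have e1 : r = q - g * (q /ₘ g) :=
      eq_sub_of_add_eq (Polynomial.modByMonic_add_div q g)
    have h2 : aeval M ((q /ₘ g) * g) x = 0 := by
      rw [_root_.map_mul, Module.End.mul_apply, hgann, _root_.map_zero]
    rw [e1, map_sub, LinearMap.sub_apply, mul_comm g, h2, sub_zero]
  have hv0 : v ≠ 0 := by
    intro h0
    have hx12 : x ∈ V₁ ⊔ V₂ := by rw [hcompl.sup_eq_top]; trivial
    obtain ⟨x₁, hx₁, x₂, hx₂, hsum⟩ := Submodule.mem_sup.mp hx12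
    have hvx₂ : v = x₂ := by
      rw [hvdef, ← hsum, map_add, hq₁ x₁ hx₁, hq₂ x₂ hx₂, zero_add]
    have hx₂0 : x₂ = 0 := hvx₂.symm.trans h0
    have hxV₁ : x ∈ V₁ := by rw [← hsum, hx₂0, add_zero]; exact hx₁
    exact hn (hint n hxV₁)
  have hr0 : r ≠ 0 := by
    intro h0
    rw [h0, _root_.map_zero] at hvr
    exact hv0 (by rw [hvr]; rfl)
  have hrdeglt : r.natDegree < m :=
    Polynomial.natDegree_lt_natDegree hr0 (degree_modByMonic_lt q hgmonic)
  have hgG : g ∈ hGfin.toFinset := by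
    rw [Set.Finite.mem_toFinset]; exact ⟨hgmonic, hgP, hr0⟩
  have hK₀δ : K₀ ≤ |r.leadingCoeff| :=
    Finset.min'_le F _ (Finset.mem_insert_of_mem (Finset.mem_image_of_mem _ hgG))
  -- the vectors M^j x, j < m
  set w : Fin m → Ed d := fun j => (M ^ (j : ℕ)) x with hwdef
  have hwint : ∀ j : Fin m, ∃ z : Fin d → ℤ, w j = intVec z :=
    fun j => ⟨(A ^ (j : ℕ)) *ᵥ n, pow_mulVecLin_intVec A n j⟩
  have hwind : LinearIndependent ℝ w := by
    rw [Fintype.linearIndependent_iff]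
    intro c hc
    by_contra hcne
    push_neg at hcne
    obtain ⟨j₀, hj₀⟩ := hcne
    set f : ℝ[X] := ∑ j : Fin m, C (c j) * X ^ (j : ℕ) with hfdef
    have hterm : ∀ j : Fin m, aeval M (C (c j) * X ^ (j : ℕ)) x = c j • w j := by
      intro j
      rw [_root_.map_mul, Module.End.mul_apply, aeval_X_pow, aeval_C,
        Module.algebraMap_end_apply]
    have hfann : aeval M f x = 0 := by
      rw [hfdef, map_sum, LinearMap.sum_apply]
      simp only [hterm]
      exact hc
    have hcoeff : f.coeff (j₀ : ℕ) = c j₀ := by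
      rw [hfdef, Polynomial.finset_sum_coeff]
      rw [Finset.sum_eq_single j₀]
      · rw [coeff_C_mul, coeff_X_pow, if_pos rfl, mul_one]
      · intro j _ hne
        rw [coeff_C_mul, coeff_X_pow, if_neg (fun h => hne (Fin.val_injective h.symm)), mul_zero]
      · intro h; exact absurd (Finset.mem_univ j₀) h
    have hfne : f ≠ 0 := fun h0 => hj₀ (by rw [← hcoeff, h0, coeff_zero])
    have hdeg : f.natDegree < m := by
      have hle : f.natDegree ≤ m - 1 := by
        rw [hfdef]
        apply Polynomial.natDegree_sum_le_of_forall_le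
        intro j _
        refine (natDegree_C_mul_X_pow_le (c j) (j : ℕ)).trans ?_
        have := j.isLt; omega
      omega
    exact absurd (hmin f hfne hfann) (not_le.mpr hdeg)
  have hvsum : v = ∑ j : Fin m, r.coeff (j : ℕ) • w j := by
    calc v = aeval M r x := hvr
      _ = (∑ i ∈ Finset.range m, r.coeff i • M ^ i) x := by
          rw [Polynomial.aeval_eq_sum_range' hrdeglt]
      _ = ∑ i ∈ Finset.range m, r.coeff i • (M ^ i) x := by
          rw [LinearMap.sum_apply]; simp only [LinearMap.smul_apply]
      _ = ∑ j : Fin m, r.coeff (j : ℕ) • (M ^ (j : ℕ)) x := Finset.sum_range _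
  -- extend to a basis consisting of integer vectors
  set sing : Fin d → Ed d := fun i => Pi.single i 1 with hsingdef
  set t : Set (Ed d) := Set.range w ∪ Set.range sing with htdef
  have htfin : t.Finite := (Set.finite_range w).union (Set.finite_range sing)
  have hsind : LinearIndependent ℝ ((↑) : Set.range w → Ed d) := (linearIndepOn_id_range_iff hwind.injective).mpr hwind
  obtain ⟨bs, hbt, hsb, htsub, hbind⟩ : ∃ b ⊆ t, Set.range w ⊆ b ∧ t ⊆ Submodule.span ℝ b ∧
      LinearIndependent ℝ ((↑) : b → Ed d) :=
    exists_linearIndepOn_id_extension hsind Set.subset_union_left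
  have hspan : ⊤ ≤ Submodule.span ℝ bs := by
    intro y _
    have hy : y = ∑ i, y i • sing i := by
      apply _root_.funext; intro k
      rw [Finset.sum_apply]
      simp [hsingdef, Pi.single_apply, mul_ite]
    rw [hy]
    exact Submodule.sum_mem _ fun i _ =>
      Submodule.smul_mem _ _ (htsub (Or.inr (Set.mem_range_self i)))
  haveI : Fintype bs := (htfin.subset hbt).fintype
  set B : Module.Basis bs ℝ (Ed d) := Module.Basis.mk hbind (by rwa [Subtype.range_coe]) with hBdef
  have hcard : Fintype.card bs = d := by
    have hc1 := Module.finrank_eq_card_basis B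
    rw [Module.finrank_fin_fun] at hc1
    exact hc1.symm
  set e : Fin d ≃ bs := (Fintype.equivFinOfCardEq hcard).symm with hedef
  set N : Matrix (Fin d) (Fin d) ℝ := Matrix.of fun i k => (e k : Ed d) i with hNdef
  have hNcol : ∀ k : Fin d, ∃ z : Fin d → ℤ, ((e k : Ed d)) = intVec z := by
    intro k
    have hmem : (e k : Ed d) ∈ t := hbt (e k).2
    rcases hmem with ⟨j, hj⟩ | ⟨i, hi⟩
    · obtain ⟨z, hz⟩ := hwint j
      exact ⟨z, by rw [← hj, hz]⟩
    · refine ⟨Pi.single i 1, ?_⟩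
      rw [← hi]
      apply _root_.funext; intro k'
      simp [hsingdef, intVec, Pi.single_apply, apply_ite (fun z : ℤ => (z : ℝ))]
  choose Z hZ using hNcol
  have hNZ : N = (Matrix.of fun i k => Z k i).map ((↑) : ℤ → ℝ) := by
    apply _root_.funext; intro i
    apply _root_.funext; intro k
    rw [hNdef]
    simp only [Matrix.map_apply, Matrix.of_apply]
    exact congrFun (hZ k) i
  have hdetZ : N.det = (((Matrix.of fun i k => Z k i).det : ℤ) : ℝ) := by
    rw [hNZ]
    simpa using (RingHom.map_det (Int.castRingHom ℝ) (Matrix.of fun i k => Z k i)).symm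
  have hNne : N.det ≠ 0 := by
    intro h0
    obtain ⟨cvec, hc0, hcv⟩ := Matrix.exists_mulVec_eq_zero_iff.mpr h0
    have hind : LinearIndependent ℝ (fun k : Fin d => (e k : Ed d)) :=
      hbind.comp e e.injective
    rw [Fintype.linearIndependent_iff] at hind
    have hsum : ∑ k, cvec k • ((e k : Ed d)) = 0 := by
      apply _root_.funext; intro i
      rw [Finset.sum_apply]
      have hcvi := congrFun hcv i
      simpa [Matrix.mulVec, dotProduct, hNdef, mul_comm] using hcvi
    exact hc0 (_root_.funext fun k => hind cvec hsum k)
  have hdet1 : (1:ℝ) ≤ |N.det| := by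
    have hz0 : (Matrix.of fun i k => Z k i).det ≠ 0 := by
      intro h0; apply hNne; rw [hdetZ, h0]; simp
    have h1 : (1:ℤ) ≤ |(Matrix.of fun i k => Z k i).det| := Int.one_le_abs hz0
    rw [hdetZ, ← Int.cast_abs]
    exact_mod_cast h1
  -- express v through the matrix N
  set ι : Fin m → Fin d := fun j => e.symm ⟨w j, hsb (Set.mem_range_self j)⟩ with hιdef
  have hcol : ∀ j : Fin m, (fun i => N i (ι j)) = w j := by
    intro j
    apply _root_.funext; intro i
    show ((e (ι j) : Ed d)) i = w j i
    simp only [hιdef, Equiv.apply_symm_apply]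
  have hιinj : Function.Injective ι := by
    intro j j' hjj
    have h := congrArg (fun k => ((e k : bs) : Ed d)) hjj
    simp only [hιdef, Equiv.apply_symm_apply] at h
    exact hwind.injective h
  set c' : Fin d → ℝ := fun k => ∑ j : Fin m, if k = ι j then r.coeff (j : ℕ) else 0 with hc'def
  have hNc' : N.mulVec c' = v := by
    apply _root_.funext; intro i
    show ∑ k, N i k * c' k = v i
    calc ∑ k, N i k * c' k
        = ∑ k, ∑ j : Fin m, if k = ι j then N i k * r.coeff (j : ℕ) else 0 := by
          refine Finset.sum_congr rfl fun k _ => ?_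
          rw [hc'def, Finset.mul_sum]
          exact Finset.sum_congr rfl fun j _ => by rw [mul_ite, mul_zero]
      _ = ∑ j : Fin m, ∑ k, if k = ι j then N i k * r.coeff (j : ℕ) else 0 :=
          Finset.sum_comm
      _ = ∑ j : Fin m, N i (ι j) * r.coeff (j : ℕ) := by
          refine Finset.sum_congr rfl fun j _ => ?_
          simp [Finset.sum_ite_eq']
      _ = ∑ j : Fin m, r.coeff (j : ℕ) * w j i := by
          refine Finset.sum_congr rfl fun j _ => ?_
          rw [congrFun (hcol j) i, mul_comm]
      _ = v i := by
          rw [hvsum, Finset.sum_apply]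
          exact Finset.sum_congr rfl fun j _ => by simp
  set j₀ : Fin m := ⟨r.natDegree, hrdeglt⟩ with hj₀def
  have hc'j₀ : c' (ι j₀) = r.leadingCoeff := by
    rw [hc'def]
    show (∑ j : Fin m, if ι j₀ = ι j then r.coeff (j : ℕ) else 0) = r.leadingCoeff
    rw [Finset.sum_eq_single j₀]
    · rw [if_pos rfl]; rfl
    · intro j _ hne
      rw [if_neg (fun h => hne ((hιinj h).symm))]
    · intro h; exact absurd (Finset.mem_univ _) h
  have hkey : N.det • c' = N.adjugate.mulVec v := by
    rw [← hNc', Matrix.mulVec_mulVec, Matrix.adjugate_mul, Matrix.smul_mulVec,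
      Matrix.one_mulVec]
  -- entry bounds
  set β : ℝ := CM ^ d * eucNorm x with hβdef
  have hβ1 : 1 ≤ β := by
    have hc1 : (1:ℝ) ≤ CM ^ d := one_le_pow₀ hCM1
    calc (1:ℝ) = 1 * 1 := by ring
      _ ≤ CM ^ d * eucNorm x := mul_le_mul hc1 hx1 one_pos.le (by linarith)
  have hβ0 : 0 ≤ β := le_trans zero_le_one hβ1
  have hNb : ∀ i k, |N i k| ≤ β := by
    intro i k
    have hmem : (e k : Ed d) ∈ t := hbt (e k).2
    rcases hmem with ⟨j, hj⟩ | ⟨i', hi'⟩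
    · have hik : N i k = w j i := by
        show ((e k : Ed d)) i = w j i
        rw [← hj]
      rw [hik]
      calc |w j i| ≤ eucNorm (w j) := abs_coord_le_eucNorm _ _
        _ ≤ CM ^ (j : ℕ) * eucNorm x := hMpow _ _
        _ ≤ CM ^ d * eucNorm x := by
            apply mul_le_mul_of_nonneg_right _ (eucNorm_nonneg x)
            exact pow_le_pow_right₀ hCM1 (le_trans (le_of_lt j.isLt) hmd)
    · have hik : N i k = sing i' i := by
        show ((e k : Ed d)) i = sing i' i
        rw [← hi']
      rw [hik, hsingdef]
      have h01 : |(Pi.single i' 1 : Ed d) i| ≤ 1 := by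
        rw [Pi.single_apply]; split <;> simp
      exact h01.trans hβ1
  have hadj : ∀ i k, |N.adjugate i k| ≤ (Nat.factorial d : ℝ) * β ^ d := by
    intro i k
    rw [Matrix.adjugate_apply]
    have hb : ∀ i' j', |(N.updateRow k (Pi.single i 1)) i' j'| ≤ β := by
      intro i' j'
      rw [Matrix.updateRow_apply]
      split
      · have h01 : |(Pi.single i 1 : Ed d) j'| ≤ 1 := by
          rw [Pi.single_apply]; split <;> simp
        exact h01.trans hβ1
      · exact hNb _ _
    have hb' : ∀ i' j', (AbsoluteValue.abs : AbsoluteValue ℝ ℝ)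
        (N.updateRow k (Pi.single i 1) i' j') ≤ β := hb
    have hdetle := Matrix.det_le hb'
    simpa [Fintype.card_fin, nsmul_eq_mul] using hdetle
  have hmain : |r.leadingCoeff| ≤ (d:ℝ) * ((Nat.factorial d : ℝ) * β ^ d) * eucNorm v := by
    have hpt : N.det * c' (ι j₀) = ∑ k, N.adjugate (ι j₀) k * v k := by
      have hk := congrFun hkey (ι j₀)
      simpa [Matrix.mulVec, dotProduct, smul_eq_mul] using hk
    calc |r.leadingCoeff| = |c' (ι j₀)| := by rw [hc'j₀]
      _ ≤ |N.det| * |c' (ι j₀)| := le_mul_of_one_le_left (abs_nonneg _) hdet1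
      _ = |N.det * c' (ι j₀)| := (abs_mul _ _).symm
      _ = |∑ k, N.adjugate (ι j₀) k * v k| := by rw [hpt]
      _ ≤ ∑ k, |N.adjugate (ι j₀) k * v k| := Finset.abs_sum_le_sum_abs _ _
      _ ≤ ∑ _k : Fin d, (Nat.factorial d : ℝ) * β ^ d * eucNorm v := by
          refine Finset.sum_le_sum fun k _ => ?_
          rw [abs_mul]
          refine mul_le_mul (hadj _ _) (abs_coord_le_eucNorm v k) (abs_nonneg _) ?_
          have : (0:ℝ) ≤ (Nat.factorial d : ℝ) := Nat.cast_nonneg _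
          positivity
      _ = (d:ℝ) * ((Nat.factorial d : ℝ) * β ^ d) * eucNorm v := by
          rw [Finset.sum_const, Finset.card_univ, Fintype.card_fin, nsmul_eq_mul]; ring
  -- conclusion
  have hxpos : (0:ℝ) < eucNorm x := lt_of_lt_of_le one_pos hx1
  have hXpos : (0:ℝ) < eucNorm x ^ d := pow_pos hxpos d
  have hrpow : eucNorm x ^ (-(d:ℝ)) = (eucNorm x ^ d)⁻¹ := by
    rw [Real.rpow_neg (eucNorm_nonneg x), Real.rpow_natCast]
  rw [hrpow, eucDist]
  refine le_csInf ⟨eucNorm (x - 0), ⟨0, Submodule.zero_mem V₁, rfl⟩⟩ ?_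
  rintro y' ⟨w', hw', rfl⟩
  have h5 : eucNorm v ≤ Cq * eucNorm (x - w') := by
    have hveq : v = aeval M q (x - w') := by
      rw [map_sub, hq₁ w' hw', sub_zero]
    rw [hveq]
    exact hCq _
  have h6 : K₀ ≤ D * eucNorm x ^ d * eucNorm (x - w') := by
    have hβd : β ^ d = CM ^ (d*d) * eucNorm x ^ d := by rw [hβdef, mul_pow, ← pow_mul]
    have hnn : (0:ℝ) ≤ (d:ℝ) * ((Nat.factorial d : ℝ) * β ^ d) := by
      have h1 : (0:ℝ) ≤ (Nat.factorial d : ℝ) := Nat.cast_nonneg _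
      have h2 : (0:ℝ) ≤ (d:ℝ) := Nat.cast_nonneg _
      positivity
    calc K₀ ≤ |r.leadingCoeff| := hK₀δ
      _ ≤ (d:ℝ) * ((Nat.factorial d : ℝ) * β ^ d) * eucNorm v := hmain
      _ ≤ (d:ℝ) * ((Nat.factorial d : ℝ) * β ^ d) * (Cq * eucNorm (x - w')) := by
          exact mul_le_mul_of_nonneg_left h5 hnn
      _ = D * eucNorm x ^ d * eucNorm (x - w') := by rw [hβd, hDdef]; ring
  calc K₀ / D * (eucNorm x ^ d)⁻¹ = K₀ / (D * eucNorm x ^ d) := by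
        rw [← div_eq_mul_inv, div_div]
    _ ≤ eucNorm (x - w') := by
        rw [div_le_iff₀ (by positivity)]
        calc K₀ ≤ D * eucNorm x ^ d * eucNorm (x - w') := h6
          _ = eucNorm (x - w') * (D * eucNorm x ^ d) := by ring

end
end

section
/- Let g : ℝ^D → ℝ^D be a C^∞ map such that sup_x ‖Dg(x)‖ ≤ σ < 1 and the derivatives of g of all orders up to m ≥ 1 are uniformly bounded. Then for every δ > 0 with σ + δ < 1 there exists a constant C (depending on δ, m, and the bounds on the derivatives of g up to order m) such that for every n ∈ ℕ: (a) sup_x ‖D^m(g^n)(x)‖ ≤ C(σ+δ)^n, where g^n is the n-fold composition; and (b) for every C^∞ function φ : ℝ^D → ℝ whose derivatives up to order m are uniformly bounded, sup_x ‖D^m(φ∘g^n)(x)‖ ≤ C(σ+δ)^n ‖φ‖_{C^m}. -/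
noncomputable section

/-- The `C^m` norm of `φ`: the supremum over `x` of the norms of the derivatives of `φ`
of orders `0` through `m`. -/
def CmNorm {E F : Type*} [NormedAddCommGroup E] [NormedSpace ℝ E]
    [NormedAddCommGroup F] [NormedSpace ℝ F] (m : ℕ) (φ : E → F) : ℝ :=
  ⨆ k : Fin (m + 1), ⨆ x, ‖iteratedFDeriv ℝ (k : ℕ) φ x‖

open Finset ContinuousLinearMap

private lemma aux_chain {E F : Type*} [NormedAddCommGroup E] [NormedSpace ℝ E]
    [NormedAddCommGroup F] [NormedSpace ℝ F]
    (ψ : E → F) (h : E → E) (hψ : ContDiff ℝ (⊤:ℕ∞) ψ) (hh : ContDiff ℝ (⊤:ℕ∞) h)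
    (k : ℕ) (x : E) :
    ‖iteratedFDeriv ℝ (k+1) (ψ ∘ h) x‖ ≤ ∑ j ∈ Finset.range (k+1),
      (k.choose j : ℝ) * ‖iteratedFDeriv ℝ j (fun y => fderiv ℝ ψ (h y)) x‖ *
        ‖iteratedFDeriv ℝ (k-j+1) h x‖ := by
  have hψd : Differentiable ℝ ψ := hψ.differentiable (by simp)
  have hhd : Differentiable ℝ h := hh.differentiable (by simp)
  have heq : fderiv ℝ (ψ ∘ h) = fun y => (compL ℝ E E F) (fderiv ℝ ψ (h y)) (fderiv ℝ h y) := by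
    funext y
    exact fderiv_comp y (hψd (h y)) (hhd y)
  rw [← norm_iteratedFDeriv_fderiv, heq]
  have h1 : ContDiff ℝ (⊤:ℕ∞) (fun y => fderiv ℝ ψ (h y)) :=
    (hψ.fderiv_right (by exact_mod_cast le_top)).comp hh
  have h2 : ContDiff ℝ (⊤:ℕ∞) (fun y => fderiv ℝ h y) :=
    hh.fderiv_right (by exact_mod_cast le_top)
  have := (compL ℝ E E F).norm_iteratedFDeriv_le_of_bilinear_of_le_one h1 h2 x
    (n := k) (by exact_mod_cast le_top) (norm_compL_le ℝ E E F)
  refine this.trans (le_of_eq (Finset.sum_congr rfl fun j hj => ?_))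
  rw [norm_iteratedFDeriv_fderiv]

set_option maxHeartbeats 1000000 in
/-- Let `g : ℝ^D → ℝ^D` be a `C^∞` map with `sup ‖Dg‖ ≤ σ < 1` and with
uniformly bounded derivatives of all orders up to `m ≥ 1`. Then for every `δ > 0` with
`σ + δ < 1` there is a constant `C` such that for every `n ∈ ℕ`:
(a) `sup_x ‖D^m(g^n)(x)‖ ≤ C (σ+δ)^n`; and (b) for every `C^∞` function `φ : ℝ^D → ℝ` with
uniformly bounded derivatives up to order `m`,
`sup_x ‖D^m(φ ∘ g^n)(x)‖ ≤ C (σ+δ)^n ‖φ‖_{C^m}`. -/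
theorem statement_15 {D : ℕ} (g : (Fin D → ℝ) → (Fin D → ℝ))
    (hg : ContDiff ℝ (⊤ : ℕ∞) g)
    (σ : ℝ) (hσ : σ < 1) (hDg : ∀ x, ‖fderiv ℝ g x‖ ≤ σ)
    (m : ℕ) (hm : 1 ≤ m)
    (hbd : ∀ k : ℕ, 1 ≤ k → k ≤ m → ∃ B : ℝ, ∀ x, ‖iteratedFDeriv ℝ k g x‖ ≤ B)
    (δ : ℝ) (hδ : 0 < δ) (hσδ : σ + δ < 1) :
    ∃ C : ℝ,
      (∀ (n : ℕ) (x : Fin D → ℝ), ‖iteratedFDeriv ℝ m (g^[n]) x‖ ≤ C * (σ + δ) ^ n) ∧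
      (∀ φ : (Fin D → ℝ) → ℝ, ContDiff ℝ (⊤ : ℕ∞) φ →
        (∀ k : ℕ, k ≤ m → ∃ B : ℝ, ∀ x, ‖iteratedFDeriv ℝ k φ x‖ ≤ B) →
        ∀ (n : ℕ) (x : Fin D → ℝ),
          ‖iteratedFDeriv ℝ m (φ ∘ g^[n]) x‖ ≤ C * (σ + δ) ^ n * CmNorm m φ) := by

  set lam : ℝ := σ + δ with hlamdef
  have hσ0 : 0 ≤ σ := le_trans (norm_nonneg _) (hDg 0)
  have hlam0 : 0 < lam := add_pos_of_nonneg_of_pos hσ0 hδ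
  have hlam1 : lam < 1 := hσδ
  have hσlam : σ ≤ lam := le_add_of_nonneg_right hδ.le
  have hlampow : ∀ n : ℕ, lam ^ n ≤ 1 := fun n => pow_le_one₀ hlam0.le hlam1.le
  have hlampow0 : ∀ n : ℕ, 0 ≤ lam ^ n := fun n => pow_nonneg hlam0.le n
  -- smoothness of iterates
  have hgn : ∀ n, ContDiff ℝ (⊤:ℕ∞) (g^[n]) := by
    intro n
    induction n with
    | zero => simpa using contDiff_id
    | succ n ih => rw [Function.iterate_succ']; exact hg.comp ih
  -- uniform bound on derivatives of g of orders 1..m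
  obtain ⟨Bg, hBg1, hBgσ, hBg⟩ :
      ∃ B : ℝ, 1 ≤ B ∧ σ ≤ B ∧ ∀ i, 1 ≤ i → i ≤ m → ∀ x : Fin D → ℝ, ‖iteratedFDeriv ℝ i g x‖ ≤ B := by
    classical
    set b : ℕ → ℝ := fun i => if h : 1 ≤ i ∧ i ≤ m then (hbd i h.1 h.2).choose else 0 with hbdef
    refine ⟨1 + σ + ∑ i ∈ Finset.range (m+1), |b i|, ?_, ?_, ?_⟩
    · have : (0:ℝ) ≤ ∑ i ∈ Finset.range (m+1), |b i| :=
        Finset.sum_nonneg fun i _ => abs_nonneg _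
      linarith
    · have : (0:ℝ) ≤ ∑ i ∈ Finset.range (m+1), |b i| :=
        Finset.sum_nonneg fun i _ => abs_nonneg _
      linarith
    · intro i h1 h2 x
      have hbi : ‖iteratedFDeriv ℝ i g x‖ ≤ b i := by
        simp only [hbdef, dif_pos (And.intro h1 h2)]
        exact (hbd i h1 h2).choose_spec x
      have h3 : |b i| ≤ ∑ j ∈ Finset.range (m+1), |b j| :=
        Finset.single_le_sum (fun j _ => abs_nonneg (b j)) (Finset.mem_range.mpr (by omega))
      have h4 : b i ≤ |b i| := le_abs_self _
      linarith
  -- first derivative bound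
  have hd1 : ∀ n, ∀ x : Fin D → ℝ, ‖fderiv ℝ (g^[n]) x‖ ≤ σ ^ n := by
    intro n
    induction n with
    | zero =>
      intro x
      simp only [Function.iterate_zero, pow_zero]
      rw [fderiv_id]
      exact ContinuousLinearMap.norm_id_le
    | succ n ih =>
      intro x
      rw [Function.iterate_succ']
      rw [fderiv_comp x (hg.differentiable (by simp) _)
        ((hgn n).differentiable (by simp) _)]
      calc ‖(fderiv ℝ g (g^[n] x)).comp (fderiv ℝ (g^[n]) x)‖
          ≤ ‖fderiv ℝ g (g^[n] x)‖ * ‖fderiv ℝ (g^[n]) x‖ := ContinuousLinearMap.opNorm_comp_le _ _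
        _ ≤ σ * σ ^ n := mul_le_mul (hDg _) (ih x) (norm_nonneg _) hσ0
        _ = σ ^ (n+1) := (pow_succ σ n).symm ▸ (mul_comm σ (σ^n) ▸ rfl)
  have hone : ∀ (f : (Fin D → ℝ) → (Fin D → ℝ)) (x : Fin D → ℝ), ‖iteratedFDeriv ℝ 1 f x‖ = ‖fderiv ℝ f x‖ := by
    intro f x
    have := norm_iteratedFDeriv_fderiv (𝕜 := ℝ) (f := f) (x := x) (n := 0)
    rw [norm_iteratedFDeriv_zero] at this
    simpa using this.symm
  have hd1' : ∀ n, ∀ x : Fin D → ℝ, ‖iteratedFDeriv ℝ 1 (g^[n]) x‖ ≤ lam ^ n := by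
    intro n x
    rw [hone]
    exact (hd1 n x).trans (pow_le_pow_left₀ hσ0 hσlam n)
  -- main strong claim
  have key : ∀ K : ℕ, ∃ C : ℝ, 1 ≤ C ∧ ∀ i, 1 ≤ i → i ≤ K → i ≤ m →
      ∀ (n : ℕ) (x : Fin D → ℝ), ‖iteratedFDeriv ℝ i (g^[n]) x‖ ≤ C * lam ^ n := by
    intro K
    induction K with
    | zero => exact ⟨1, le_refl 1, fun i h1 h2 => by omega⟩
    | succ K ih =>
      obtain ⟨C', hC'1, hC'⟩ := ih
      by_cases hKm : K + 1 ≤ m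
      · rcases Nat.eq_zero_or_pos K with hK0 | hKpos
        · subst hK0
          refine ⟨C', hC'1, fun i h1 h2 h3 n x => ?_⟩
          have : i = 1 := by omega
          subst this
          exact (hd1' n x).trans (le_mul_of_one_le_left (hlampow0 n) hC'1)
        · -- K ≥ 1, handle derivative of order K+1 ≥ 2
          set Q : ℝ := (K.factorial : ℝ) * Bg * C' ^ K with hQdef
          set Efac : ℝ := (2:ℝ) ^ K * (Q * (C' * 1)) with hEdef
          have hQ0 : 0 ≤ Q := by positivity
          have hE0 : 0 ≤ Efac := by positivity
          have hrec : ∀ (n : ℕ) (x : Fin D → ℝ), ‖iteratedFDeriv ℝ (K+1) (g^[n+1]) x‖ ≤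
              σ * ‖iteratedFDeriv ℝ (K+1) (g^[n]) x‖ + Efac * lam ^ n := by
            intro n x
            rw [Function.iterate_succ']
            refine (aux_chain g (g^[n]) hg (hgn n) K x).trans ?_
            rw [Finset.sum_range_succ']
            have h0term : (K.choose 0 : ℝ) * ‖iteratedFDeriv ℝ 0
                  (fun y => fderiv ℝ g (g^[n] y)) x‖ * ‖iteratedFDeriv ℝ (K-0+1) (g^[n]) x‖ ≤
                σ * ‖iteratedFDeriv ℝ (K+1) (g^[n]) x‖ := by
              rw [norm_iteratedFDeriv_zero]
              simp only [Nat.choose_zero_right, Nat.cast_one, one_mul, Nat.sub_zero]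
              exact mul_le_mul_of_nonneg_right (hDg _) (norm_nonneg _)
            have hrest : ∑ j ∈ Finset.range K, ((K.choose (j+1) : ℝ) *
                ‖iteratedFDeriv ℝ (j+1) (fun y => fderiv ℝ g (g^[n] y)) x‖ *
                ‖iteratedFDeriv ℝ (K-(j+1)+1) (g^[n]) x‖) ≤ Efac * lam ^ n := by
              have hterm : ∀ j ∈ Finset.range K, (K.choose (j+1) : ℝ) *
                  ‖iteratedFDeriv ℝ (j+1) (fun y => fderiv ℝ g (g^[n] y)) x‖ *
                  ‖iteratedFDeriv ℝ (K-(j+1)+1) (g^[n]) x‖ ≤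
                  (K.choose (j+1) : ℝ) * (Q * (C' * lam ^ n)) := by
                intro j hj
                have hjK : j + 1 ≤ K := Finset.mem_range.mp hj
                have hfirst : ‖iteratedFDeriv ℝ (j+1) (fun y => fderiv ℝ g (g^[n] y)) x‖ ≤ Q := by
                  have hcomp : (fun y => fderiv ℝ g (g^[n] y)) = (fderiv ℝ g) ∘ (g^[n]) := rfl
                  rw [hcomp]
                  have hb1 := norm_iteratedFDeriv_comp_le (𝕜 := ℝ)
                    (hg.fderiv_right (by exact_mod_cast le_top)) (hgn n)
                    (n := j+1) (N := ((⊤:ℕ∞) : WithTop ℕ∞)) (by exact_mod_cast le_top) x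
                    (C := Bg) (D := C') ?_ ?_
                  · refine hb1.trans ?_
                    rw [hQdef]
                    have hf : ((j+1).factorial : ℝ) ≤ (K.factorial : ℝ) :=
                      Nat.cast_le.mpr (Nat.factorial_le hjK)
                    have hp : C' ^ (j+1) ≤ C' ^ K := pow_le_pow_right₀ hC'1 hjK
                    have hBg0 : (0:ℝ) ≤ Bg := by linarith
                    calc ((j+1).factorial : ℝ) * Bg * C' ^ (j+1)
                        ≤ (K.factorial : ℝ) * Bg * C' ^ (j+1) := by
                          apply mul_le_mul_of_nonneg_right (mul_le_mul_of_nonneg_right hf hBg0)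
                          positivity
                      _ ≤ (K.factorial : ℝ) * Bg * C' ^ K := by
                          apply mul_le_mul_of_nonneg_left hp
                          positivity
                  · intro i hi
                    rw [norm_iteratedFDeriv_fderiv]
                    rcases Nat.eq_zero_or_pos i with h0 | hipos
                    · subst h0
                      rw [hone]
                      exact (hDg _).trans hBgσ
                    · exact hBg (i+1) (by omega) (by omega) _
                  · intro i hi1 hi2
                    have := hC' i hi1 (by omega) (by omega) n x
                    calc ‖iteratedFDeriv ℝ i (g^[n]) x‖ ≤ C' * lam ^ n := this
                      _ ≤ C' := by nlinarith [hlampow n, hlampow0 n]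
                      _ ≤ C' ^ i := le_self_pow₀ hC'1 (by omega)
                have hsecond : ‖iteratedFDeriv ℝ (K-(j+1)+1) (g^[n]) x‖ ≤ C' * lam ^ n :=
                  hC' (K-(j+1)+1) (by omega) (by omega) (by omega) n x
                have h1 : (0:ℝ) ≤ (K.choose (j+1) : ℝ) := Nat.cast_nonneg _
                calc (K.choose (j+1) : ℝ) *
                    ‖iteratedFDeriv ℝ (j+1) (fun y => fderiv ℝ g (g^[n] y)) x‖ *
                    ‖iteratedFDeriv ℝ (K-(j+1)+1) (g^[n]) x‖
                    ≤ (K.choose (j+1) : ℝ) * Q * (C' * lam ^ n) := by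
                      apply mul_le_mul (mul_le_mul_of_nonneg_left hfirst h1) hsecond
                        (norm_nonneg _)
                      positivity
                  _ = (K.choose (j+1) : ℝ) * (Q * (C' * lam ^ n)) := by ring
              refine (Finset.sum_le_sum hterm).trans ?_
              rw [← Finset.sum_mul]
              have hch : ∑ j ∈ Finset.range K, (K.choose (j+1) : ℝ) ≤ (2:ℝ) ^ K := by
                have := Nat.sum_range_choose K
                have h2 : ∑ j ∈ Finset.range (K+1), (K.choose j : ℝ) = (2:ℝ) ^ K := by
                  exact_mod_cast congrArg (Nat.cast : ℕ → ℝ) this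
                rw [Finset.sum_range_succ'] at h2
                have h3 : (0:ℝ) ≤ (K.choose 0 : ℝ) := Nat.cast_nonneg _
                linarith
              have hcq : (0:ℝ) ≤ Q * (C' * lam ^ n) := by positivity
              calc (∑ j ∈ Finset.range K, (K.choose (j+1) : ℝ)) * (Q * (C' * lam ^ n))
                  ≤ (2:ℝ) ^ K * (Q * (C' * lam ^ n)) := mul_le_mul_of_nonneg_right hch hcq
                _ ≤ Efac * lam ^ n := by rw [hEdef]; nlinarith [hlampow n, hlampow0 n, hQ0]
            have hsub : ∀ j ∈ Finset.range K,
                (K.choose (j+1) : ℝ) * ‖iteratedFDeriv ℝ (j+1)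
                  (fun y => fderiv ℝ g (g^[n] y)) x‖ *
                ‖iteratedFDeriv ℝ (K-(j+1)+1) (g^[n]) x‖ =
                (K.choose (j+1) : ℝ) * ‖iteratedFDeriv ℝ (j+1)
                  (fun y => fderiv ℝ g (g^[n] y)) x‖ *
                ‖iteratedFDeriv ℝ (K-(j+1)+1) (g^[n]) x‖ := fun _ _ => rfl
            linarith [h0term, hrest]
          -- solve the recursion
          set Cn : ℝ := max 1 (Efac/δ) with hCndef
          have hCn1 : (1:ℝ) ≤ Cn := le_max_left _ _
          have hCnE : Efac ≤ Cn * δ := by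
            rw [hCndef]
            have : Efac/δ ≤ max 1 (Efac/δ) := le_max_right _ _
            calc Efac = (Efac/δ) * δ := by field_simp
              _ ≤ max 1 (Efac/δ) * δ := mul_le_mul_of_nonneg_right this hδ.le
          have hKplus : ∀ (n : ℕ) (x : Fin D → ℝ), ‖iteratedFDeriv ℝ (K+1) (g^[n]) x‖ ≤ Cn * lam ^ n := by
            intro n
            induction n with
            | zero =>
              intro x
              simp only [Function.iterate_zero, pow_zero, mul_one]
              rw [← norm_iteratedFDeriv_fderiv]
              have hid : fderiv ℝ (id : (Fin D → ℝ) → (Fin D → ℝ)) = fun _ => ContinuousLinearMap.id ℝ (Fin D → ℝ) :=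
                funext fun y => fderiv_id
              rw [hid, iteratedFDeriv_const_of_ne (by omega)]
              simpa using le_trans zero_le_one hCn1
            | succ n ih =>
              intro x
              have h1 := hrec n x
              have h2 := ih x
              calc ‖iteratedFDeriv ℝ (K+1) (g^[n+1]) x‖
                  ≤ σ * ‖iteratedFDeriv ℝ (K+1) (g^[n]) x‖ + Efac * lam ^ n := h1
                _ ≤ σ * (Cn * lam ^ n) + Efac * lam ^ n := by nlinarith [hlampow0 n]
                _ = (σ * Cn + Efac) * lam ^ n := by ring
                _ ≤ (Cn * lam) * lam ^ n := by
                    apply mul_le_mul_of_nonneg_right _ (hlampow0 n)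
                    have : σ * Cn + Cn * δ ≤ Cn * lam := by rw [hlamdef]; ring_nf; nlinarith
                    linarith
                _ = Cn * lam ^ (n+1) := by ring
          refine ⟨max C' Cn, le_trans hC'1 (le_max_left _ _), fun i h1 h2 h3 n x => ?_⟩
          rcases Nat.lt_or_ge i (K+1) with hi | hi
          · exact (hC' i h1 (by omega) h3 n x).trans
              (mul_le_mul_of_nonneg_right (le_max_left _ _) (hlampow0 n))
          · have : i = K + 1 := by omega
            subst this
            exact (hKplus n x).trans
              (mul_le_mul_of_nonneg_right (le_max_right _ _) (hlampow0 n))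
      · exact ⟨C', hC'1, fun i h1 h2 h3 => hC' i h1 (by omega) h3⟩
  obtain ⟨Ca, hCa1, hCa⟩ := key m
  have hCa' : ∀ i, 1 ≤ i → i ≤ m → ∀ (n : ℕ) (x : Fin D → ℝ),
      ‖iteratedFDeriv ℝ i (g^[n]) x‖ ≤ Ca * lam ^ n := fun i h1 h2 => hCa i h1 h2 h2
  -- constants for part (b)
  set R : ℝ := (2:ℝ) ^ (m-1) * ((m-1).factorial : ℝ) * (m.factorial : ℝ) * Bg ^ m * Ca ^ m
    with hRdef
  have hR0 : (0:ℝ) ≤ R := by positivity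
  set Cb : ℝ := max 1 (R / lam) with hCbdef
  have hCb1 : (1:ℝ) ≤ Cb := le_max_left _ _
  have hRCb : R ≤ Cb * lam := by
    have h1 : R / lam ≤ Cb := le_max_right _ _
    calc R = (R / lam) * lam := by field_simp
      _ ≤ Cb * lam := mul_le_mul_of_nonneg_right h1 hlam0.le
  refine ⟨max Ca Cb, ?_, ?_⟩
  · intro n x
    exact (hCa' m hm le_rfl n x).trans
      (mul_le_mul_of_nonneg_right (le_max_left _ _) (hlampow0 n))
  · intro φ hφ hφbd n x
    have hMφ : ∀ k, k ≤ m → ∀ y : Fin D → ℝ, ‖iteratedFDeriv ℝ k φ y‖ ≤ CmNorm m φ := by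
      intro k hk y
      obtain ⟨B, hB⟩ := hφbd k hk
      have hbdd : BddAbove (Set.range fun y : Fin D → ℝ => ‖iteratedFDeriv ℝ k φ y‖) :=
        ⟨B, by rintro _ ⟨y, rfl⟩; exact hB y⟩
      have h1 : ‖iteratedFDeriv ℝ k φ y‖ ≤ ⨆ y : Fin D → ℝ, ‖iteratedFDeriv ℝ k φ y‖ :=
        le_ciSup hbdd y
      have hbdd2 : BddAbove (Set.range fun i : Fin (m+1) =>
          ⨆ y : Fin D → ℝ, ‖iteratedFDeriv ℝ (i : ℕ) φ y‖) := (Set.finite_range _).bddAbove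
      have h2 : (⨆ y : Fin D → ℝ, ‖iteratedFDeriv ℝ k φ y‖) ≤ CmNorm m φ := by
        have h3 := le_ciSup hbdd2 (⟨k, by omega⟩ : Fin (m+1))
        simpa [CmNorm] using h3
      exact h1.trans h2
    have hM0 : 0 ≤ CmNorm m φ :=
      le_trans (norm_nonneg (iteratedFDeriv ℝ 0 φ x)) (hMφ 0 (by omega) x)
    cases n with
    | zero =>
      simp only [Function.iterate_zero, Function.comp_id, pow_zero, mul_one]
      exact (hMφ m le_rfl x).trans
        (le_mul_of_one_le_left hM0 (le_trans hCb1 (le_max_right _ _)))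
    | succ n =>
      obtain ⟨k, hk⟩ : ∃ k, m = k + 1 := ⟨m-1, (Nat.succ_pred_eq_of_pos hm).symm⟩
      have hco : φ ∘ g^[n+1] = (φ ∘ g) ∘ g^[n] := by
        rw [Function.iterate_succ']
        rfl
      subst hk
      rw [hco]
      have hψ : ContDiff ℝ (⊤:ℕ∞) (φ ∘ g) := hφ.comp hg
      refine (aux_chain (φ ∘ g) (g^[n]) hψ (hgn n) k x).trans ?_
      set Cψ : ℝ := ((k+1).factorial : ℝ) * CmNorm (k+1) φ * Bg ^ (k+1) with hCψdef
      have hCψ0 : 0 ≤ Cψ := by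
        rw [hCψdef]
        exact mul_nonneg (mul_nonneg (by positivity) hM0) (by positivity)
      have hDψ : ∀ i, i ≤ k → ∀ y : Fin D → ℝ,
          ‖iteratedFDeriv ℝ i (fderiv ℝ (φ ∘ g)) y‖ ≤ Cψ := by
        intro i hi y
        rw [norm_iteratedFDeriv_fderiv]
        have hb := norm_iteratedFDeriv_comp_le (𝕜 := ℝ) hφ hg (n := i+1)
          (N := ((⊤:ℕ∞) : WithTop ℕ∞)) (by exact_mod_cast le_top) y
          (C := CmNorm (k+1) φ) (D := Bg)
          (fun l hl => hMφ l (by omega) _)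
          (fun l hl1 hl2 => (hBg l hl1 (by omega) y).trans (le_self_pow₀ hBg1 (by omega)))
        refine hb.trans ?_
        rw [hCψdef]
        have hf : ((i+1).factorial : ℝ) ≤ ((k+1).factorial : ℝ) :=
          Nat.cast_le.mpr (Nat.factorial_le (by omega))
        have hp : Bg ^ (i+1) ≤ Bg ^ (k+1) := pow_le_pow_right₀ hBg1 (by omega)
        calc ((i+1).factorial : ℝ) * CmNorm (k+1) φ * Bg ^ (i+1)
            ≤ ((k+1).factorial : ℝ) * CmNorm (k+1) φ * Bg ^ (i+1) := by
              exact mul_le_mul_of_nonneg_right (mul_le_mul_of_nonneg_right hf hM0)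
                (by positivity)
          _ ≤ ((k+1).factorial : ℝ) * CmNorm (k+1) φ * Bg ^ (k+1) := by
              exact mul_le_mul_of_nonneg_left hp (mul_nonneg (by positivity) hM0)
      set P : ℝ := (k.factorial : ℝ) * Cψ * Ca ^ k with hPdef
      have hCa0 : (0:ℝ) ≤ Ca := by linarith
      have hP0 : 0 ≤ P := by
        rw [hPdef]
        exact mul_nonneg (mul_nonneg (by positivity) hCψ0) (pow_nonneg hCa0 k)
      have hterm : ∀ j ∈ Finset.range (k+1), (k.choose j : ℝ) *
          ‖iteratedFDeriv ℝ j (fun y => fderiv ℝ (φ ∘ g) (g^[n] y)) x‖ *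
          ‖iteratedFDeriv ℝ (k-j+1) (g^[n]) x‖ ≤
          (k.choose j : ℝ) * (P * (Ca * lam ^ n)) := by
        intro j hj
        have hjk : j ≤ k := by
          have := Finset.mem_range.mp hj
          omega
        have hfirst : ‖iteratedFDeriv ℝ j (fun y => fderiv ℝ (φ ∘ g) (g^[n] y)) x‖ ≤ P := by
          have hcomp : (fun y => fderiv ℝ (φ ∘ g) (g^[n] y)) = (fderiv ℝ (φ ∘ g)) ∘ (g^[n]) := rfl
          rw [hcomp]
          have hb := norm_iteratedFDeriv_comp_le (𝕜 := ℝ)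
            (hψ.fderiv_right (by exact_mod_cast le_top)) (hgn n) (n := j)
            (N := ((⊤:ℕ∞) : WithTop ℕ∞)) (by exact_mod_cast le_top) x (C := Cψ) (D := Ca)
            (fun i hi => hDψ i (by omega) _) ?_
          · refine hb.trans ?_
            rw [hPdef]
            have hf : (j.factorial : ℝ) ≤ (k.factorial : ℝ) :=
              Nat.cast_le.mpr (Nat.factorial_le hjk)
            have hp : Ca ^ j ≤ Ca ^ k := pow_le_pow_right₀ hCa1 hjk
            calc (j.factorial : ℝ) * Cψ * Ca ^ j
                ≤ (k.factorial : ℝ) * Cψ * Ca ^ j := by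
                  exact mul_le_mul_of_nonneg_right (mul_le_mul_of_nonneg_right hf hCψ0)
                    (pow_nonneg hCa0 j)
              _ ≤ (k.factorial : ℝ) * Cψ * Ca ^ k := by
                  exact mul_le_mul_of_nonneg_left hp (mul_nonneg (by positivity) hCψ0)
          · intro i hi1 hi2
            have h5 := hCa' i hi1 (by omega) n x
            calc ‖iteratedFDeriv ℝ i (g^[n]) x‖ ≤ Ca * lam ^ n := h5
              _ ≤ Ca := by nlinarith [hlampow n, hlampow0 n]
              _ ≤ Ca ^ i := le_self_pow₀ hCa1 (by omega)
        have hsecond : ‖iteratedFDeriv ℝ (k-j+1) (g^[n]) x‖ ≤ Ca * lam ^ n :=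
          hCa' (k-j+1) (by omega) (by omega) n x
        have h1 : (0:ℝ) ≤ (k.choose j : ℝ) := Nat.cast_nonneg _
        calc (k.choose j : ℝ) * ‖iteratedFDeriv ℝ j
              (fun y => fderiv ℝ (φ ∘ g) (g^[n] y)) x‖ *
            ‖iteratedFDeriv ℝ (k-j+1) (g^[n]) x‖
            ≤ (k.choose j : ℝ) * P * (Ca * lam ^ n) := by
              apply mul_le_mul (mul_le_mul_of_nonneg_left hfirst h1) hsecond (norm_nonneg _)
              exact mul_nonneg h1 hP0
          _ = (k.choose j : ℝ) * (P * (Ca * lam ^ n)) := by ring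
      refine (Finset.sum_le_sum hterm).trans ?_
      rw [← Finset.sum_mul]
      have hch : ∑ j ∈ Finset.range (k+1), (k.choose j : ℝ) = (2:ℝ) ^ k := by
        exact_mod_cast congrArg (Nat.cast : ℕ → ℝ) (Nat.sum_range_choose k)
      rw [hch]
      have hRval : R = (2:ℝ) ^ k * (k.factorial : ℝ) * ((k+1).factorial : ℝ) *
          Bg ^ (k+1) * Ca ^ (k+1) := by
        rw [hRdef]
        simp [Nat.add_sub_cancel]
      have hexp : (2:ℝ) ^ k * (P * (Ca * lam ^ n)) = R * CmNorm (k+1) φ * lam ^ n := by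
        rw [hPdef, hCψdef, hRval]
        ring
      rw [hexp]
      have hfin : R * CmNorm (k+1) φ * lam ^ n ≤ (Cb * lam) * CmNorm (k+1) φ * lam ^ n :=
        mul_le_mul_of_nonneg_right (mul_le_mul_of_nonneg_right hRCb hM0) (hlampow0 n)
      refine hfin.trans ?_
      have hCble : Cb ≤ max Ca Cb := le_max_right _ _
      have h9 : (Cb * lam) * CmNorm (k+1) φ * lam ^ n ≤
          (max Ca Cb * lam) * CmNorm (k+1) φ * lam ^ n :=
        mul_le_mul_of_nonneg_right
          (mul_le_mul_of_nonneg_right (mul_le_mul_of_nonneg_right hCble hlam0.le) hM0)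
          (hlampow0 n)
      refine h9.trans (le_of_eq ?_)
      rw [pow_succ]
      ring

end
end

section
/- Let g : ℝ^D → ℝ^D be a C^∞ map such that sup_x ‖Dg(x)‖ ≤ σ with σ > 1 and the derivatives of g of all orders up to m ≥ 1 are uniformly bounded. Then there exists a constant C (depending on m and the bounds on the derivatives of g up to order m) such that for every n ∈ ℕ: (a) sup_x ‖D^m(g^n)(x)‖ ≤ Cσ^{mn}, where g^n is the n-fold composition; and (b) for every C^∞ function φ : ℝ^D → ℝ whose derivatives up to order m are uniformly bounded, sup_x ‖D^m(φ∘g^n)(x)‖ ≤ Cσ^{m²n} ‖φ‖_{C^m}. -/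
noncomputable section

section Aux

variable {E : Type*} [NormedAddCommGroup E] [NormedSpace ℝ E]

private lemma aux_le_top {n : ℕ} : (n : WithTop ℕ∞) ≤ ((⊤ : ℕ∞) : WithTop ℕ∞) := by
  exact_mod_cast le_top

private lemma aux_one_le_top : (1 : WithTop ℕ∞) ≤ ((⊤ : ℕ∞) : WithTop ℕ∞) := by
  exact_mod_cast le_top

private lemma key_bound (g : E → E) (hg : ContDiff ℝ (⊤ : ℕ∞) g)
    (σ : ℝ) (hσ : 1 < σ) (hDg : ∀ x, ‖fderiv ℝ g x‖ ≤ σ)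
    (m : ℕ) (A : ℝ) (hAσ : σ ≤ A)
    (hAg : ∀ j, 1 ≤ j → j ≤ m → ∀ x, ‖iteratedFDeriv ℝ j g x‖ ≤ A) :
    ∀ k, k ≤ m → ∃ C : ℝ, 1 ≤ C ∧ ∀ j, 1 ≤ j → j ≤ k → ∀ (n : ℕ) (x : E),
      ‖iteratedFDeriv ℝ j (g^[n]) x‖ ≤ C * σ ^ (j * n) := by
  have hσ0 : (0:ℝ) < σ := lt_trans one_pos hσ
  have hA1 : (1:ℝ) ≤ A := le_trans hσ.le hAσ
  have hA0 : (0:ℝ) ≤ A := le_trans zero_le_one hA1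
  have hgn : ∀ n, ContDiff ℝ (⊤ : ℕ∞) (g^[n]) := by
    intro n
    induction n with
    | zero => simpa using contDiff_id
    | succ n ih => rw [Function.iterate_succ']; exact hg.comp ih
  have hw : ContDiff ℝ (⊤ : ℕ∞) (fderiv ℝ g) := hg.fderiv_right (by simp)
  intro k
  induction k with
  | zero =>
    exact fun _ => ⟨1, le_refl 1, fun j hj hj0 => absurd (hj.trans hj0) (by omega)⟩
  | succ k ih =>
    intro hkm
    obtain ⟨C, hC1, hC⟩ := ih (by omega)
    have hC0 : (0:ℝ) < C := lt_of_lt_of_le one_pos hC1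
    -- Bound on derivatives of `(fderiv g) ∘ g^[n]` of order `≤ k`.
    have hcomp : ∀ (i n : ℕ), i ≤ k → ∀ x : E,
        ‖iteratedFDeriv ℝ i ((fderiv ℝ g) ∘ (g^[n])) x‖
          ≤ (i.factorial : ℝ) * A * (C * σ ^ n) ^ i := by
      intro i n hik x
      apply norm_iteratedFDeriv_comp_le hw (hgn n) aux_le_top x
      · intro j hj
        cases j with
        | zero =>
          rw [norm_iteratedFDeriv_zero]
          exact (hDg _).trans hAσ
        | succ j =>
          rw [norm_iteratedFDeriv_fderiv]
          exact hAg (j+2) (by omega) (by omega) _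
      · intro j hj1 hjk
        calc ‖iteratedFDeriv ℝ j (g^[n]) x‖ ≤ C * σ ^ (j*n) := hC j hj1 (le_trans hjk hik) n x
          _ ≤ (C * σ ^ n) ^ j := by
              rw [mul_pow, ← pow_mul, mul_comm n j]
              have := le_self_pow₀ hC1 (by omega : j ≠ 0)
              gcongr
    set K : ℝ := ∑ i ∈ Finset.range k,
      ((k.choose (i+1) : ℝ) * ((i+1).factorial : ℝ) * A * C^(i+2)) with hKdef
    have hK0 : 0 ≤ K := Finset.sum_nonneg fun i _ => by positivity
    have hσk0 : (0:ℝ) ≤ σ * (σ ^ k - 1) := by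
      have : (1:ℝ) ≤ σ ^ k := one_le_pow₀ hσ.le
      nlinarith
    set C' : ℝ := 1 + K / (σ * (σ ^ k - 1)) with hC'def
    have hC'1 : 1 ≤ C' := le_add_of_nonneg_right (div_nonneg hK0 hσk0)
    have hC'0 : (0:ℝ) ≤ C' := le_trans zero_le_one hC'1
    have hmain : σ * C' + K ≤ C' * σ ^ (k+1) := by
      rcases Nat.eq_zero_or_pos k with hk0 | hkpos
      · subst hk0
        have hKz : K = 0 := by simp [hKdef]
        have hCz : C' = 1 := by simp [hC'def, hKz]
        simp [hKz, hCz]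
      · have h1 : (0:ℝ) < σ ^ k - 1 := sub_pos.mpr (one_lt_pow₀ hσ (by omega))
        have hx : (0:ℝ) < σ * (σ ^ k - 1) := by positivity
        have hKC : K ≤ C' * (σ * (σ ^ k - 1)) := by
          rw [hC'def]
          have h2 : K / (σ * (σ^k - 1)) * (σ * (σ^k - 1)) = K := div_mul_cancel₀ K hx.ne'
          nlinarith
        have hps : σ ^ (k+1) = σ ^ k * σ := pow_succ σ k
        nlinarith
    -- inner induction on n for order k+1
    have hstep : ∀ (n : ℕ) (x : E),
        ‖iteratedFDeriv ℝ (k+1) (g^[n]) x‖ ≤ C' * σ ^ ((k+1) * n) := by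
      intro n
      induction n with
      | zero =>
        intro x
        rw [Function.iterate_zero]
        have hid : ‖iteratedFDeriv ℝ (k+1) (id : E → E) x‖ ≤ 1 := by
          rw [← norm_iteratedFDeriv_fderiv]
          have h : fderiv ℝ (id : E → E) = fun _ => ContinuousLinearMap.id ℝ E :=
            funext fun x => fderiv_id
          rw [h]
          cases k with
          | zero => rw [norm_iteratedFDeriv_zero]; exact ContinuousLinearMap.norm_id_le
          | succ j =>
            rw [iteratedFDeriv_const_of_ne (Nat.succ_ne_zero j) _]
            simp
        calc ‖iteratedFDeriv ℝ (k+1) (id : E → E) x‖ ≤ 1 := hid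
          _ ≤ C' * σ ^ ((k+1)*0) := by simpa using hC'1
      | succ n ihn =>
        intro x
        have hfd : fderiv ℝ (g^[n+1]) = fun y =>
            (ContinuousLinearMap.compL ℝ E E E) (fderiv ℝ g (g^[n] y)) (fderiv ℝ (g^[n]) y) := by
          funext y
          rw [Function.iterate_succ']
          rw [fderiv_comp y ((hg.differentiable (by simp)).differentiableAt)
            (((hgn n).differentiable (by simp)).differentiableAt)]
          rfl
        rw [← norm_iteratedFDeriv_fderiv, hfd]
        have hbil := (ContinuousLinearMap.compL ℝ E E E).norm_iteratedFDeriv_le_of_bilinear_of_le_one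
          (f := fun y => fderiv ℝ g (g^[n] y)) (g := fderiv ℝ (g^[n]))
          (hw.comp (hgn n)) ((hgn n).fderiv_right (by simp)) x (n := k) aux_le_top
          (ContinuousLinearMap.norm_compL_le ℝ E E E)
        refine hbil.trans ?_
        rw [Finset.sum_range_succ']
        have hT0 : (k.choose 0 : ℝ) * ‖iteratedFDeriv ℝ 0 (fun y => fderiv ℝ g (g^[n] y)) x‖ *
            ‖iteratedFDeriv ℝ (k - 0) (fderiv ℝ (g^[n])) x‖ ≤ σ * (C' * σ ^ ((k+1)*n)) := by
          rw [Nat.choose_zero_right, norm_iteratedFDeriv_zero, Nat.sub_zero,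
            norm_iteratedFDeriv_fderiv]
          have h1 := hDg (g^[n] x)
          have h2 := ihn x
          have h3 : (0:ℝ) ≤ ‖iteratedFDeriv ℝ (k+1) (g^[n]) x‖ := norm_nonneg _
          push_cast
          nlinarith [norm_nonneg (fderiv ℝ g (g^[n] x))]
        have hTi : ∀ i ∈ Finset.range k,
            (k.choose (i+1) : ℝ) * ‖iteratedFDeriv ℝ (i+1) (fun y => fderiv ℝ g (g^[n] y)) x‖ *
              ‖iteratedFDeriv ℝ (k - (i+1)) (fderiv ℝ (g^[n])) x‖ ≤
            ((k.choose (i+1) : ℝ) * (((i+1).factorial : ℝ)) * A * C^(i+2)) * σ ^ ((k+1)*n) := by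
          intro i hi
          have hik : i < k := Finset.mem_range.mp hi
          have h1 : ‖iteratedFDeriv ℝ (i+1) (fun y => fderiv ℝ g (g^[n] y)) x‖
              ≤ ((i+1).factorial : ℝ) * A * (C * σ ^ n) ^ (i+1) := hcomp (i+1) n (by omega) x
          have h2 : ‖iteratedFDeriv ℝ (k - (i+1)) (fderiv ℝ (g^[n])) x‖
              ≤ C * σ ^ ((k-i)*n) := by
            rw [norm_iteratedFDeriv_fderiv]
            have he : k - (i+1) + 1 = k - i := by omega
            rw [he]
            exact hC (k-i) (by omega) (by omega) n x
          have hexp : (C * σ ^ n) ^ (i+1) * (C * σ ^ ((k-i)*n)) = C^(i+2) * σ ^ ((k+1)*n) := by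
            have h3 : n*(i+1) + (k-i)*n = (k+1)*n := by
              rw [mul_comm (k-i) n, ← Nat.mul_add, show i+1+(k-i) = k+1 from by omega,
                mul_comm]
            rw [mul_pow, ← pow_mul, ← h3, pow_add]
            ring
          calc (k.choose (i+1) : ℝ) * ‖iteratedFDeriv ℝ (i+1) (fun y => fderiv ℝ g (g^[n] y)) x‖ *
              ‖iteratedFDeriv ℝ (k - (i+1)) (fderiv ℝ (g^[n])) x‖
              ≤ (k.choose (i+1) : ℝ) * (((i+1).factorial : ℝ) * A * (C * σ ^ n) ^ (i+1)) *
                (C * σ ^ ((k-i)*n)) := by gcongr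
            _ = (k.choose (i+1) : ℝ) * (((i+1).factorial : ℝ)) * A *
                ((C * σ ^ n) ^ (i+1) * (C * σ ^ ((k-i)*n))) := by ring
            _ = ((k.choose (i+1) : ℝ) * (((i+1).factorial : ℝ)) * A * C^(i+2)) * σ ^ ((k+1)*n) := by
                rw [hexp]; ring
        calc (∑ i ∈ Finset.range k,
              (k.choose (i+1) : ℝ) * ‖iteratedFDeriv ℝ (i+1) (fun y => fderiv ℝ g (g^[n] y)) x‖ *
                ‖iteratedFDeriv ℝ (k - (i+1)) (fderiv ℝ (g^[n])) x‖) +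
            (k.choose 0 : ℝ) * ‖iteratedFDeriv ℝ 0 (fun y => fderiv ℝ g (g^[n] y)) x‖ *
              ‖iteratedFDeriv ℝ (k - 0) (fderiv ℝ (g^[n])) x‖
            ≤ (∑ i ∈ Finset.range k,
              ((k.choose (i+1) : ℝ) * (((i+1).factorial : ℝ)) * A * C^(i+2)) * σ ^ ((k+1)*n)) +
              σ * (C' * σ ^ ((k+1)*n)) :=
                add_le_add (Finset.sum_le_sum hTi) hT0
          _ = (σ * C' + K) * σ ^ ((k+1)*n) := by
              rw [← Finset.sum_mul, ← hKdef]; ring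
          _ ≤ (C' * σ ^ (k+1)) * σ ^ ((k+1)*n) := by
              have : (0:ℝ) ≤ σ ^ ((k+1)*n) := by positivity
              exact mul_le_mul_of_nonneg_right hmain this
          _ = C' * σ ^ ((k+1)*(n+1)) := by
              rw [mul_assoc, ← pow_add, Nat.mul_succ, Nat.add_comm ((k+1)*n) (k+1)]
    refine ⟨max C C', le_trans hC1 (le_max_left _ _), fun j hj1 hjk1 n x => ?_⟩
    rcases Nat.lt_or_ge j (k+1) with hjk | hjk
    · calc ‖iteratedFDeriv ℝ j (g^[n]) x‖ ≤ C * σ ^ (j*n) := hC j hj1 (by omega) n x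
        _ ≤ max C C' * σ ^ (j*n) := by gcongr; exact le_max_left _ _
    · have hj : j = k+1 := by omega
      subst hj
      calc ‖iteratedFDeriv ℝ (k+1) (g^[n]) x‖ ≤ C' * σ ^ ((k+1)*n) := hstep n x
        _ ≤ max C C' * σ ^ ((k+1)*n) := by gcongr; exact le_max_right _ _

end Aux

/-- Let `g : ℝ^D → ℝ^D` be a `C^∞` map with `sup ‖Dg‖ ≤ σ`, `σ > 1`, and
with uniformly bounded derivatives of all orders up to `m ≥ 1`. Then there is a constant `C`
such that for every `n ∈ ℕ`: (a) `sup_x ‖D^m(g^n)(x)‖ ≤ C σ^{mn}`; and (b) for every `C^∞`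
function `φ : ℝ^D → ℝ` with uniformly bounded derivatives up to order `m`,
`sup_x ‖D^m(φ ∘ g^n)(x)‖ ≤ C σ^{m²n} ‖φ‖_{C^m}`. -/
theorem statement_16 {D : ℕ} (g : (Fin D → ℝ) → (Fin D → ℝ))
    (hg : ContDiff ℝ (⊤ : ℕ∞) g)
    (σ : ℝ) (hσ : 1 < σ) (hDg : ∀ x, ‖fderiv ℝ g x‖ ≤ σ)
    (m : ℕ) (hm : 1 ≤ m)
    (hbd : ∀ k : ℕ, 1 ≤ k → k ≤ m → ∃ B : ℝ, ∀ x, ‖iteratedFDeriv ℝ k g x‖ ≤ B) :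
    ∃ C : ℝ,
      (∀ (n : ℕ) (x : Fin D → ℝ), ‖iteratedFDeriv ℝ m (g^[n]) x‖ ≤ C * σ ^ (m * n)) ∧
      (∀ φ : (Fin D → ℝ) → ℝ, ContDiff ℝ (⊤ : ℕ∞) φ →
        (∀ k : ℕ, k ≤ m → ∃ B : ℝ, ∀ x, ‖iteratedFDeriv ℝ k φ x‖ ≤ B) →
        ∀ (n : ℕ) (x : Fin D → ℝ),
          ‖iteratedFDeriv ℝ m (φ ∘ g^[n]) x‖ ≤ C * σ ^ (m ^ 2 * n) * CmNorm m φ) := by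
  have hσ0 : (0:ℝ) < σ := lt_trans one_pos hσ
  have hgn : ∀ n, ContDiff ℝ (⊤ : ℕ∞) (g^[n]) := by
    intro n
    induction n with
    | zero => simpa using contDiff_id
    | succ n ih => rw [Function.iterate_succ']; exact hg.comp ih
  -- get a uniform bound A on derivatives of g of orders 1..m
  obtain ⟨A, hAσ, hAg⟩ : ∃ A : ℝ, σ ≤ A ∧ ∀ j, 1 ≤ j → j ≤ m → ∀ x,
      ‖iteratedFDeriv ℝ j g x‖ ≤ A := by
    clear hm
    induction m with
    | zero => exact ⟨σ, le_refl σ, fun j hj1 hj0 => absurd (hj1.trans hj0) (by omega)⟩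
    | succ M ih =>
      obtain ⟨A, hAσ, hA⟩ := ih (fun k hk1 hkM => hbd k hk1 (by omega))
      obtain ⟨B, hB⟩ := hbd (M+1) (by omega) le_rfl
      refine ⟨max A B, le_trans hAσ (le_max_left _ _), fun j hj1 hjM x => ?_⟩
      rcases Nat.lt_or_ge j (M+1) with h | h
      · exact le_trans (hA j hj1 (by omega) x) (le_max_left _ _)
      · have : j = M+1 := by omega
        subst this
        exact le_trans (hB x) (le_max_right _ _)
  obtain ⟨C₀, hC₀1, hC₀⟩ := key_bound g hg σ hσ hDg m A hAσ hAg m le_rfl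
  have hC₀0 : (0:ℝ) < C₀ := lt_of_lt_of_le one_pos hC₀1
  refine ⟨C₀ + (m.factorial : ℝ) * C₀ ^ m, fun n x => ?_, fun φ hφ hφbd n x => ?_⟩
  · calc ‖iteratedFDeriv ℝ m (g^[n]) x‖ ≤ C₀ * σ ^ (m*n) := hC₀ m hm le_rfl n x
      _ ≤ (C₀ + (m.factorial : ℝ) * C₀ ^ m) * σ ^ (m*n) := by
          have : (0:ℝ) ≤ (m.factorial : ℝ) * C₀ ^ m := by positivity
          have h2 : (0:ℝ) ≤ σ ^ (m*n) := by positivity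
          nlinarith
  · -- part (b)
    have hN : ∀ i, i ≤ m → ∀ y, ‖iteratedFDeriv ℝ i φ y‖ ≤ CmNorm m φ := by
      intro i hi y
      obtain ⟨B, hB⟩ := hφbd i hi
      have h1 : ‖iteratedFDeriv ℝ i φ y‖ ≤ ⨆ x, ‖iteratedFDeriv ℝ i φ x‖ :=
        le_ciSup ⟨B, by rintro _ ⟨x, rfl⟩; exact hB x⟩ y
      have h2 : (⨆ x, ‖iteratedFDeriv ℝ i φ x‖) ≤ CmNorm m φ := by
        have := le_ciSup (f := fun k : Fin (m+1) => ⨆ x, ‖iteratedFDeriv ℝ (k:ℕ) φ x‖)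
          (Set.Finite.bddAbove (Set.finite_range _)) (⟨i, by omega⟩ : Fin (m+1))
        simpa [CmNorm] using this
      exact h1.trans h2
    have hNn : (0:ℝ) ≤ CmNorm m φ := le_trans (norm_nonneg _) (hN 0 (by omega) 0)
    have hcomp := norm_iteratedFDeriv_comp_le hφ (hgn n) aux_le_top x
      (C := CmNorm m φ) (D := C₀ * σ ^ n)
      (fun i hi => hN i hi _)
      (fun i hi1 him => by
        calc ‖iteratedFDeriv ℝ i (g^[n]) x‖ ≤ C₀ * σ ^ (i*n) := hC₀ i hi1 him n x
          _ ≤ (C₀ * σ ^ n) ^ i := by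
              rw [mul_pow, ← pow_mul, mul_comm n i]
              have := le_self_pow₀ hC₀1 (by omega : i ≠ 0)
              gcongr)
    refine hcomp.trans ?_
    have hexp : (C₀ * σ ^ n) ^ m = C₀ ^ m * σ ^ (m*n) := by
      rw [mul_pow, ← pow_mul, mul_comm n m]
    rw [hexp]
    have hle : σ ^ (m*n) ≤ σ ^ (m^2*n) := by
      apply pow_le_pow_right₀ hσ.le
      have h1 : m ≤ m^2 := by nlinarith
      exact Nat.mul_le_mul_right n h1
    calc (m.factorial : ℝ) * CmNorm m φ * (C₀ ^ m * σ ^ (m*n))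
        = ((m.factorial : ℝ) * C₀ ^ m) * σ ^ (m*n) * CmNorm m φ := by ring
      _ ≤ (C₀ + (m.factorial : ℝ) * C₀ ^ m) * σ ^ (m^2*n) * CmNorm m φ := by
          have hfle : (m.factorial : ℝ) * C₀ ^ m ≤ C₀ + (m.factorial : ℝ) * C₀ ^ m :=
            le_add_of_nonneg_left hC₀0.le
          gcongr

end
end
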